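/- Let G⃗ be a directed graph, r ∈ ℕ, and let H⃗ be an r-transitive fraternal augmentation of G⃗. Let v, w be vertices joined in the underlying undirected graph G by a path v = v_1, v_2, …, v_l = w of length at most r. Then (v,w) ∈ E(H⃗), or (w,v) ∈ E(H⃗), or there is some vertex v_i on the path with (v_i, v), (v_i, w) ∈ E(H⃗). -/

import Mathlib

/-- `IsTFA D H`: `H` is a (tight) 1-transitive fraternal augmentation of the
directed graph `D`: it contains all arcs of `D`, is transitive over `D`
(if `(u,w),(w,v)` are arcs of `D` then `(u,v)` is an arc of `H`) and fraternal
over `D` (if `(u,w),(v,w)` are arcs of `D` with `u ≠ v` then `(u,v)` or `(v,u)`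
is an arc of `H`). -/
def IsTFA {V : Type*} (D H : V → V → Prop) : Prop :=
  (∀ u v, D u v → H u v) ∧
  (∀ u w v, D u w → D w v → H u v) ∧
  (∀ u v w, u ≠ v → D u w → D v w → H u v ∨ H v u)

/-- `IsAug D r H`: `H` is an `r`-transitive fraternal augmentation of `D`,
obtained by iterating tight 1-transitive fraternal augmentations `r` times. -/
inductive IsAug {V : Type*} (D : V → V → Prop) : ℕ → (V → V → Prop) → Prop
  | zero : IsAug D 0 D
  | succ {n : ℕ} {H H' : V → V → Prop} :
      IsAug D n H → IsTFA H H' → IsAug D (n + 1) H'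

lemma isAug_subset {V : Type*} {D H : V → V → Prop} {r : ℕ} (h : IsAug D r H) :
    ∀ a b, D a b → H a b := by
  induction h with
  | zero => exact fun a b => id
  | succ _ htfa ih => exact fun a b hab => htfa.1 a b (ih a b hab)

lemma exists_prefix_walk {V : Type*} {G : SimpleGraph V} :
    ∀ {x w : V} (q : G.Walk x w) (z : V), z ∈ q.support → z ≠ w →
    ∃ t : G.Walk x z, t.length + 1 ≤ q.length ∧ ∀ a ∈ t.support, a ∈ q.support := by
  intro x w q
  induction q with
  | nil =>
    intro z hz hne
    simp only [SimpleGraph.Walk.support_nil, List.mem_singleton] at hz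
    exact absurd hz hne
  | cons h q ih =>
    intro z hz hne
    rw [SimpleGraph.Walk.support_cons] at hz
    rcases List.mem_cons.mp hz with rfl | hz
    · exact ⟨.nil, by simp, by simp⟩
    · obtain ⟨t, hl, hs⟩ := ih z hz hne
      refine ⟨.cons h t, by simpa using Nat.succ_le_succ hl, ?_⟩
      intro a ha
      rw [SimpleGraph.Walk.support_cons] at ha ⊢
      rcases List.mem_cons.mp ha with rfl | ha
      · exact List.mem_cons_self
      · exact List.mem_cons_of_mem _ (hs a ha)

lemma aug_path_property_aux {V : Type*} (G : SimpleGraph V) (D : V → V → Prop)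
    (horient : ∀ u v, G.Adj u v ↔ (D u v ∨ D v u)) :
    ∀ (r : ℕ) (H : V → V → Prop), IsAug D r H → ∀ v w : V, v ≠ w →
      ∀ p : G.Walk v w, p.length ≤ r →
      H v w ∨ H w v ∨ ∃ u ∈ p.support, H u v ∧ H u w := by
  intro r
  induction r with
  | zero =>
    intro H haug v w hvw p hlen
    cases p with
    | nil => exact absurd rfl hvw
    | cons hadj q => simp [SimpleGraph.Walk.length_cons] at hlen
  | succ n ih =>
    intro H haug v w hvw p hlen
    cases haug with
    | @succ _ Hn _ haug' htfa =>
      obtain ⟨hsub, htrans, hfrat⟩ := htfa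
      have hDn : ∀ a b, D a b → Hn a b := isAug_subset haug'
      cases p with
      | nil => exact absurd rfl hvw
      | @cons _ x _ hadj q =>
        rw [SimpleGraph.Walk.length_cons] at hlen
        have hqlen : q.length ≤ n := Nat.succ_le_succ_iff.mp hlen
        have hD : D v x ∨ D x v := (horient v x).mp hadj
        by_cases hxw : x = w
        · subst hxw
          rcases hD with hd | hd
          · exact Or.inl (hsub _ _ (hDn _ _ hd))
          · exact Or.inr (Or.inl (hsub _ _ (hDn _ _ hd)))
        · have hxsup : x ∈ (SimpleGraph.Walk.cons hadj q).support := by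
            rw [SimpleGraph.Walk.support_cons]
            exact List.mem_cons_of_mem _ q.start_mem_support
          rcases ih Hn haug' x w hxw q hqlen with hb | hb | ⟨z, hzsup, hz1, hz2⟩
          · -- Hn x w
            rcases hD with hd | hd
            · exact Or.inl (htrans v x w (hDn _ _ hd) hb)
            · exact Or.inr (Or.inr ⟨x, hxsup, hsub _ _ (hDn _ _ hd), hsub _ _ hb⟩)
          · -- Hn w x
            rcases hD with hd | hd
            · rcases hfrat v w x hvw (hDn _ _ hd) hb with h' | h'
              · exact Or.inl h'
              · exact Or.inr (Or.inl h')
            · exact Or.inr (Or.inl (htrans w x v hb (hDn _ _ hd)))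
          · -- z ∈ q.support, Hn z x, Hn z w
            have hzsup' : z ∈ (SimpleGraph.Walk.cons hadj q).support := by
              rw [SimpleGraph.Walk.support_cons]
              exact List.mem_cons_of_mem _ hzsup
            rcases hD with hd | hd
            · -- D v x
              have hvx : Hn v x := hDn _ _ hd
              by_cases hzv : z = v
              · subst hzv
                exact Or.inl (hsub _ _ hz2)
              · by_cases hzw : z = w
                · subst hzw
                  rcases hfrat v z x hvw hvx hz1 with h' | h'
                  · exact Or.inl h'
                  · exact Or.inr (Or.inl h')
                · obtain ⟨t, htl, hts⟩ := exists_prefix_walk q z hzsup hzw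
                  have hvz : v ≠ z := fun h => hzv h.symm
                  have hlen2 : (SimpleGraph.Walk.cons hadj t).length ≤ n := by
                    rw [SimpleGraph.Walk.length_cons]
                    omega
                  rcases ih Hn haug' v z hvz (SimpleGraph.Walk.cons hadj t) hlen2 with
                    ha | ha | ⟨z', hz's, hz'1, hz'2⟩
                  · exact Or.inl (htrans v z w ha hz2)
                  · exact Or.inr (Or.inr ⟨z, hzsup', hsub _ _ ha, hsub _ _ hz2⟩)
                  · refine Or.inr (Or.inr ⟨z', ?_, hsub _ _ hz'1, htrans z' z w hz'2 hz2⟩)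
                    rw [SimpleGraph.Walk.support_cons] at hz's ⊢
                    rcases List.mem_cons.mp hz's with rfl | hz's
                    · exact List.mem_cons_self
                    · exact List.mem_cons_of_mem _ (hts _ hz's)
            · -- D x v
              exact Or.inr (Or.inr ⟨z, hzsup', htrans z x v hz1 (hDn _ _ hd), hsub _ _ hz2⟩)

/-- Let `H` be an `r`-transitive fraternal augmentation of an
orientation `D` of a graph `G`, and let `v, w` be distinct vertices joined in `G`
by a path of length at most `r`. Then `(v,w)` is an arc of `H`, or `(w,v)` is an
arc of `H`, or some vertex `u` on the path has arcs `(u,v)` and `(u,w)` in `H`. -/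
theorem aug_path_property {V : Type*} (G : SimpleGraph V) (D H : V → V → Prop)
    (r : ℕ) (horient : ∀ u v, G.Adj u v ↔ (D u v ∨ D v u))
    (hnd : ∀ u v, ¬ (D u v ∧ D v u)) (haug : IsAug D r H)
    (v w : V) (hvw : v ≠ w) (p : G.Walk v w) (hlen : p.length ≤ r) :
    H v w ∨ H w v ∨ ∃ u ∈ p.support, H u v ∧ H u w := by
  exact aug_path_property_aux G D horient r H haug v w hvw p hlen
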